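/- Let q = 2^{2m+1} and ℓ = 2^{m+1}. For each κ ∈ F_q×, the permutation y_κ h⁻¹ of Ω fixes exactly 5 points: ∞ together with the four points (0,0,0), (0,κ^{ℓ+1},κ^{ℓ+2}), (κ,0,κ^{ℓ+2}), (κ,κ^{ℓ+1},κ^{ℓ+2}). Consequently d_{q²+1}(h, y_κ) = q² − 4 for every κ ∈ F_q×. -/

import Mathlib

open scoped Classical

noncomputable section

namespace Stmt6

variable (K : Type*) [Field K]

/-- The Suzuki–Tits surface `{(a,b,c) ∈ F_q³ : c = ab + a^{ℓ+2} + b^ℓ}` with `ℓ = 2^{m+1}`. -/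
def SzSurface (m : ℕ) : Type _ :=
  {x : K × K × K // x.2.2 = x.1 * x.2.1 + x.1 ^ (2 ^ (m + 1) + 2) + x.2.1 ^ 2 ^ (m + 1)}

/-- `Ω = SzSurface ∪ {∞}`, with `∞` modelled by `none`. -/
def SzOmega (m : ℕ) : Type _ := Option (SzSurface K m)

/-- `h` is the permutation of `Ω` with `∞^h = ∞` and `(a,b,c)^h = (a²,b²,c²)`. -/
def IsSzFrob (m : ℕ) (h : Equiv.Perm (SzOmega K m)) : Prop :=
  h none = none ∧
    ∀ s : SzSurface K m, (h (some s)).map Subtype.val =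
      some (s.val.1 ^ 2, s.val.2.1 ^ 2, s.val.2.2 ^ 2)

/-- `y_κ` is the permutation of `Ω` with `∞^{y_κ} = ∞` and
`(a,b,c)^{y_κ} = (κa, κ^{ℓ+1}b, κ^{ℓ+2}c)`. -/
def IsSzDiag (m : ℕ) (κ : K) (y : Equiv.Perm (SzOmega K m)) : Prop :=
  y none = none ∧
    ∀ s : SzSurface K m, (y (some s)).map Subtype.val =
      some (κ * s.val.1, κ ^ (2 ^ (m + 1) + 1) * s.val.2.1,
        κ ^ (2 ^ (m + 1) + 2) * s.val.2.2)

/-- Hamming distance between two permutations: `d(g,h) = n - |fix(gh⁻¹)|`, where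
`fix(gh⁻¹)` (permutations acting on the right) is the set of points on which `g` and
`h` agree. -/
def hdist {Ω : Type*} (g h : Equiv.Perm Ω) : ℕ :=
  Nat.card Ω - Nat.card {x : Ω | g x = h x}

/-- For each `κ ∈ F_q×`, the permutation `y_κ h⁻¹` of `Ω` fixes exactly `5` points:
`∞` together with four explicitly listed points; consequently
`d_{q²+1}(h, y_κ) = q² - 4`. (A point is fixed by `y_κ h⁻¹`, permutations acting on
the right, precisely when `y_κ` and `h` agree on it.) -/
theorem suzuki_fixed_points
    (m : ℕ) (K : Type*) [Field K] [Fintype K]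
    (hK : Fintype.card K = 2 ^ (2 * m + 1))
    (κ : K) (hκ : κ ≠ 0)
    (h : Equiv.Perm (SzOmega K m)) (hh : IsSzFrob K m h)
    (y : Equiv.Perm (SzOmega K m)) (hy : IsSzDiag K m κ y) :
    (∀ x : SzOmega K m, y x = h x ↔
      x = none ∨ ∃ s : SzSurface K m, x = some s ∧
        (s.val = (0, 0, 0) ∨
         s.val = (0, κ ^ (2 ^ (m + 1) + 1), κ ^ (2 ^ (m + 1) + 2)) ∨
         s.val = (κ, 0, κ ^ (2 ^ (m + 1) + 2)) ∨
         s.val = (κ, κ ^ (2 ^ (m + 1) + 1), κ ^ (2 ^ (m + 1) + 2)))) ∧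
    Nat.card {x : SzOmega K m | y x = h x} = 5 ∧
    hdist h y = (2 ^ (2 * m + 1)) ^ 2 - 4 := by
  haveI hchar : CharP K 2 := by
    have hp : (ringChar K).Prime := CharP.char_is_prime K (ringChar K)
    obtain ⟨n, hn⟩ := FiniteField.card K (ringChar K)
    have hdvd : ringChar K ∣ 2 ^ (2 * m + 1) := by
      rw [← hK, hn.2]; exact dvd_pow_self _ n.2.ne'
    have h2 : ringChar K = 2 :=
      (Nat.prime_dvd_prime_iff_eq hp Nat.prime_two).mp (hp.dvd_of_dvd_pow hdvd)
    exact h2 ▸ ringChar.charP K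
  haveI : Finite (SzSurface K m) :=
    inferInstanceAs (Finite {x : K × K × K //
      x.2.2 = x.1 * x.2.1 + x.1 ^ (2 ^ (m + 1) + 2) + x.2.1 ^ 2 ^ (m + 1)})
  haveI : Fintype (SzSurface K m) := Fintype.ofFinite _
  haveI : Finite (SzOmega K m) := inferInstanceAs (Finite (Option (SzSurface K m)))
  set L := 2 ^ (m + 1) with hL
  have hLpos : 0 < L := by positivity
  have hkey : (κ ^ (L + 1)) ^ L = κ ^ (L + 2) := by
    have hq : κ ^ (2 ^ (2 * m + 1)) = κ := by rw [← hK]; exact FiniteField.pow_card κ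
    have hLL : κ ^ (L * L) = κ ^ 2 := by
      have hmul : L * L = 2 ^ (2 * m + 1) * 2 := by
        rw [hL, ← pow_add, ← pow_succ]; ring_nf
      rw [hmul, pow_mul, hq]
    rw [← pow_mul]
    have h1 : (L + 1) * L = L * L + L := by ring
    rw [h1, pow_add, hLL, ← pow_add]
    ring_nf
  -- surface membership of the four points
  have hp0 : ((0 : K), (0 : K), (0 : K)).2.2 =
      ((0:K),(0:K),(0:K)).1 * ((0:K),(0:K),(0:K)).2.1 + ((0:K),(0:K),(0:K)).1 ^ (L + 2) +
        ((0:K),(0:K),(0:K)).2.1 ^ L := by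
    show (0 : K) = 0 * 0 + 0 ^ (L + 2) + 0 ^ L
    rw [zero_pow (by positivity), zero_pow hLpos.ne']; ring
  have hp1 : (κ ^ (L + 2)) = (0 : K) * κ ^ (L + 1) + (0 : K) ^ (L + 2) + (κ ^ (L + 1)) ^ L := by
    rw [hkey, zero_pow (by positivity)]; ring
  have hp2 : (κ ^ (L + 2)) = κ * (0 : K) + κ ^ (L + 2) + (0 : K) ^ L := by
    rw [zero_pow hLpos.ne']; ring
  have hp3 : (κ ^ (L + 2)) = κ * κ ^ (L + 1) + κ ^ (L + 2) + (κ ^ (L + 1)) ^ L := by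
    rw [hkey]
    linear_combination -CharTwo.add_self_eq_zero (κ ^ (L + 2))
  let p0 : SzSurface K m := ⟨(0, 0, 0), hp0⟩
  let p1 : SzSurface K m := ⟨(0, κ ^ (L + 1), κ ^ (L + 2)), hp1⟩
  let p2 : SzSurface K m := ⟨(κ, 0, κ ^ (L + 2)), hp2⟩
  let p3 : SzSurface K m := ⟨(κ, κ ^ (L + 1), κ ^ (L + 2)), hp3⟩
  have hinj : Function.Injective
      (Option.map (Subtype.val) : Option (SzSurface K m) → Option (K × K × K)) :=
    Option.map_injective Subtype.val_injective
  have hfix : ∀ s : SzSurface K m, (y (some s) = h (some s)) ↔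
      (κ * s.val.1 = s.val.1 ^ 2 ∧ κ ^ (L + 1) * s.val.2.1 = s.val.2.1 ^ 2 ∧
        κ ^ (L + 2) * s.val.2.2 = s.val.2.2 ^ 2) := by
    intro s
    have h1 := hh.2 s
    have h2 := hy.2 s
    constructor
    · intro he
      rw [he, h1] at h2
      simp only [Option.some.injEq, Prod.mk.injEq] at h2
      exact ⟨h2.1.symm, h2.2.1.symm, h2.2.2.symm⟩
    · rintro ⟨e1, e2, e3⟩
      apply hinj
      rw [e1, e2, e3] at h2
      exact h2.trans h1.symm
  have hmain : ∀ x : SzOmega K m, y x = h x ↔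
      x = none ∨ ∃ s : SzSurface K m, x = some s ∧
        (s.val = (0, 0, 0) ∨
         s.val = (0, κ ^ (L + 1), κ ^ (L + 2)) ∨
         s.val = (κ, 0, κ ^ (L + 2)) ∨
         s.val = (κ, κ ^ (L + 1), κ ^ (L + 2))) := by
    intro x
    match x with
    | none => exact ⟨fun _ => Or.inl rfl, fun _ => hy.1.trans hh.1.symm⟩
    | some s =>
      obtain ⟨⟨a, b, c⟩, hsurf⟩ := s
      rw [hfix ⟨(a, b, c), hsurf⟩]
      have hsurf' : c = a * b + a ^ (L + 2) + b ^ L := hsurf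
      constructor
      · rintro ⟨e1, e2, e3⟩
        refine Or.inr ⟨_, rfl, ?_⟩
        have e1' : κ * a = a ^ 2 := e1
        have e2' : κ ^ (L + 1) * b = b ^ 2 := e2
        have ha : a = 0 ∨ a = κ := by
          have hz : a * (a - κ) = 0 := by linear_combination -e1'
          rcases mul_eq_zero.mp hz with hx | hx
          · exact Or.inl hx
          · exact Or.inr (sub_eq_zero.mp hx)
        have hb : b = 0 ∨ b = κ ^ (L + 1) := by
          have hz : b * (b - κ ^ (L + 1)) = 0 := by linear_combination -e2'
          rcases mul_eq_zero.mp hz with hx | hx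
          · exact Or.inl hx
          · exact Or.inr (sub_eq_zero.mp hx)
        rcases ha with ha | ha <;> rcases hb with hb | hb
        · have hc : c = 0 := by
            rw [hsurf', ha, hb, zero_pow (show L + 2 ≠ 0 by positivity),
              zero_pow hLpos.ne']; ring
          refine Or.inl ?_
          show ((a, b, c) : K × K × K) = (0, 0, 0)
          rw [ha, hb, hc]
        · have hc : c = κ ^ (L + 2) := by
            rw [hsurf', ha, hb, zero_pow (show L + 2 ≠ 0 by positivity), hkey]; ring
          refine Or.inr (Or.inl ?_)
          show ((a, b, c) : K × K × K) = (0, κ ^ (L + 1), κ ^ (L + 2))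
          rw [ha, hb, hc]
        · have hc : c = κ ^ (L + 2) := by
            rw [hsurf', ha, hb, zero_pow hLpos.ne']; ring
          refine Or.inr (Or.inr (Or.inl ?_))
          show ((a, b, c) : K × K × K) = (κ, 0, κ ^ (L + 2))
          rw [ha, hb, hc]
        · have hc : c = κ ^ (L + 2) := by
            rw [hsurf', ha, hb, hkey]
            linear_combination CharTwo.add_self_eq_zero (κ ^ (L + 2))
          refine Or.inr (Or.inr (Or.inr ?_))
          show ((a, b, c) : K × K × K) = (κ, κ ^ (L + 1), κ ^ (L + 2))
          rw [ha, hb, hc]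
      · rintro (hnone | ⟨s', hss', hv⟩)
        · exact absurd hnone (Option.some_ne_none _)
        · obtain rfl : (⟨(a, b, c), hsurf⟩ : SzSurface K m) = s' :=
            Option.some_injective _ hss'
          rcases hv with hv | hv | hv | hv
          · have hv2 : ((a, b, c) : K × K × K) = (0, 0, 0) := hv
            have ha : a = 0 := (Prod.ext_iff.mp hv2).1
            have hb : b = 0 := (Prod.ext_iff.mp (Prod.ext_iff.mp hv2).2).1
            have hc : c = 0 := (Prod.ext_iff.mp (Prod.ext_iff.mp hv2).2).2
            refine ⟨?_, ?_, ?_⟩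
            · show κ * a = a ^ 2; rw [ha]; ring
            · show κ ^ (L + 1) * b = b ^ 2; rw [hb]; ring
            · show κ ^ (L + 2) * c = c ^ 2; rw [hc]; ring
          · have hv2 : ((a, b, c) : K × K × K) = (0, κ ^ (L + 1), κ ^ (L + 2)) := hv
            have ha : a = 0 := (Prod.ext_iff.mp hv2).1
            have hb : b = κ ^ (L + 1) := (Prod.ext_iff.mp (Prod.ext_iff.mp hv2).2).1
            have hc : c = κ ^ (L + 2) := (Prod.ext_iff.mp (Prod.ext_iff.mp hv2).2).2
            refine ⟨?_, ?_, ?_⟩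
            · show κ * a = a ^ 2; rw [ha]; ring
            · show κ ^ (L + 1) * b = b ^ 2; rw [hb]; ring
            · show κ ^ (L + 2) * c = c ^ 2; rw [hc]; ring
          · have hv2 : ((a, b, c) : K × K × K) = (κ, 0, κ ^ (L + 2)) := hv
            have ha : a = κ := (Prod.ext_iff.mp hv2).1
            have hb : b = 0 := (Prod.ext_iff.mp (Prod.ext_iff.mp hv2).2).1
            have hc : c = κ ^ (L + 2) := (Prod.ext_iff.mp (Prod.ext_iff.mp hv2).2).2
            refine ⟨?_, ?_, ?_⟩
            · show κ * a = a ^ 2; rw [ha]; ring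
            · show κ ^ (L + 1) * b = b ^ 2; rw [hb]; ring
            · show κ ^ (L + 2) * c = c ^ 2; rw [hc]; ring
          · have hv2 : ((a, b, c) : K × K × K) = (κ, κ ^ (L + 1), κ ^ (L + 2)) := hv
            have ha : a = κ := (Prod.ext_iff.mp hv2).1
            have hb : b = κ ^ (L + 1) := (Prod.ext_iff.mp (Prod.ext_iff.mp hv2).2).1
            have hc : c = κ ^ (L + 2) := (Prod.ext_iff.mp (Prod.ext_iff.mp hv2).2).2
            refine ⟨?_, ?_, ?_⟩
            · show κ * a = a ^ 2; rw [ha]; ring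
            · show κ ^ (L + 1) * b = b ^ 2; rw [hb]; ring
            · show κ ^ (L + 2) * c = c ^ 2; rw [hc]; ring
  have hκL1 : κ ^ (L + 1) ≠ 0 := pow_ne_zero _ hκ
  have ne01 : p0 ≠ p1 := by
    intro e
    exact hκL1 (show (0:K) = κ ^ (L+1) from congrArg (fun s : SzSurface K m => s.val.2.1) e).symm
  have ne02 : p0 ≠ p2 := by
    intro e
    exact hκ (show (0:K) = κ from congrArg (fun s : SzSurface K m => s.val.1) e).symm
  have ne03 : p0 ≠ p3 := by
    intro e
    exact hκ (show (0:K) = κ from congrArg (fun s : SzSurface K m => s.val.1) e).symm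
  have ne12 : p1 ≠ p2 := by
    intro e
    exact hκ (show (0:K) = κ from congrArg (fun s : SzSurface K m => s.val.1) e).symm
  have ne13 : p1 ≠ p3 := by
    intro e
    exact hκ (show (0:K) = κ from congrArg (fun s : SzSurface K m => s.val.1) e).symm
  have ne23 : p2 ≠ p3 := by
    intro e
    exact hκL1 (show (0:K) = κ ^ (L+1) from congrArg (fun s : SzSurface K m => s.val.2.1) e).symm
  have hne : ∀ {u v : SzSurface K m}, u ≠ v → (some u : SzOmega K m) ≠ some v :=
    fun huv e => huv (Option.some_injective _ e)
  have hset : {x : SzOmega K m | y x = h x} =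
      {none, some p0, some p1, some p2, some p3} := by
    ext x
    rw [Set.mem_setOf_eq, hmain x]
    show _ ↔ x = none ∨ x = some p0 ∨ x = some p1 ∨ x = some p2 ∨ x = some p3
    constructor
    · rintro (rfl | ⟨s, rfl, (hs | hs | hs | hs)⟩)
      · exact Or.inl rfl
      · exact Or.inr (Or.inl (congrArg some (Subtype.ext hs)))
      · exact Or.inr (Or.inr (Or.inl (congrArg some (Subtype.ext hs))))
      · exact Or.inr (Or.inr (Or.inr (Or.inl (congrArg some (Subtype.ext hs)))))
      · exact Or.inr (Or.inr (Or.inr (Or.inr (congrArg some (Subtype.ext hs)))))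
    · rintro (rfl | rfl | rfl | rfl | rfl)
      · exact Or.inl rfl
      · exact Or.inr ⟨p0, rfl, Or.inl rfl⟩
      · exact Or.inr ⟨p1, rfl, Or.inr (Or.inl rfl)⟩
      · exact Or.inr ⟨p2, rfl, Or.inr (Or.inr (Or.inl rfl))⟩
      · exact Or.inr ⟨p3, rfl, Or.inr (Or.inr (Or.inr rfl))⟩
  have hcard5 : Nat.card {x : SzOmega K m | y x = h x} = 5 := by
    rw [Nat.card_coe_set_eq, hset]
    show ({none, some p0, some p1, some p2, some p3} : Set (Option (SzSurface K m))).ncard = 5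
    rw [Set.ncard_insert_of_notMem (by rintro (e | e | e | e) <;> exact Option.some_ne_none _ e.symm)
        (Set.toFinite _),
      Set.ncard_insert_of_notMem
        (by rintro (e | e | e) <;>
          [exact hne ne01 e; exact hne ne02 e; exact hne ne03 e]) (Set.toFinite _),
      Set.ncard_insert_of_notMem
        (by rintro (e | e) <;> [exact hne ne12 e; exact hne ne13 e]) (Set.toFinite _),
      Set.ncard_insert_of_notMem (by rintro e; exact hne ne23 e) (Set.toFinite _),
      Set.ncard_singleton]
  have hcardΩ : Nat.card (SzOmega K m) = (2 ^ (2 * m + 1)) ^ 2 + 1 := by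
    have e : SzSurface K m ≃ K × K :=
      { toFun := fun s => (s.val.1, s.val.2.1)
        invFun := fun p => ⟨(p.1, p.2, p.1 * p.2 + p.1 ^ (L + 2) + p.2 ^ L), rfl⟩
        left_inv := fun s => Subtype.ext (Prod.ext rfl (Prod.ext rfl s.2.symm))
        right_inv := fun p => rfl }
    have hS : Nat.card (SzSurface K m) = (2 ^ (2 * m + 1)) ^ 2 := by
      rw [Nat.card_congr e, Nat.card_prod, Nat.card_eq_fintype_card, hK, sq]
    show Nat.card (Option (SzSurface K m)) = _
    rw [Finite.card_option, hS]
  refine ⟨hmain, hcard5, ?_⟩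
  have hsymm : {x : SzOmega K m | h x = y x} = {x : SzOmega K m | y x = h x} := by
    ext x; exact eq_comm
  rw [hdist, hsymm, hcard5, hcardΩ]
  have h4 : 4 ≤ (2 ^ (2 * m + 1)) ^ 2 := by
    have h2 : 2 ≤ 2 ^ (2 * m + 1) := Nat.one_lt_two_pow (by omega)
    nlinarith
  omega


end Stmt6
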